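/- Let S be a g-symmetric endomorphism of V (not necessarily commuting with J) and define the bilinear form α on V by α(x, y) := g(S(x), J(y)) − g(S(J(x)), y). Then α is alternating and J-invariant, i.e. α ∈ Λ^{1,1}(V*), and for every h ∈ Sym^{1,1}(V) one has −(1/2) ⟨h, ρ_g^{-1}(α)⟩_g = ⟨h, S⟩_g. (This is the pointwise identity underlying the Kähler formula ddᶜu(X, Y) = g(Hess_g(u)(X), JY) − g(Hess_g(u)(JX), Y) and the simplification of the second variation of the Chern-scalar curvature at a Kähler metric.) -/
import Mathlib


open RealInnerProductSpace

/-- for `S` a `g`-symmetric endomorphism, the bilinear form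
`α(x,y) := g(Sx, Jy) - g(SJx, y)` is alternating and `J`-invariant, i.e.
`α ∈ Λ^{1,1}(V*)`, and for every `h ∈ Sym^{1,1}(V)` one has
`-(1/2)⟨h, ρ_g⁻¹(α)⟩_g = ⟨h, S⟩_g`, where `⟨A,B⟩_g = tr(A ∘ B^{*_g})`. -/
theorem stmt_8 {V : Type*} [NormedAddCommGroup V] [InnerProductSpace ℝ V]
    [FiniteDimensional ℝ V] (m : ℕ) (hm : 1 ≤ m)
    (hdim : Module.finrank ℝ V = 2 * m)
    (J : Module.End ℝ V) (hJ2 : J ∘ₗ J = -LinearMap.id)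
    (hJg : ∀ x y : V, ⟪J x, J y⟫ = ⟪x, y⟫)
    (S : Module.End ℝ V)
    (hSsym : ∀ x y : V, ⟪S x, y⟫ = ⟪x, S y⟫)
    (α : V → V → ℝ)
    (hα : ∀ x y : V, α x y = ⟪S x, J y⟫ - ⟪S (J x), y⟫) :
    -- α is alternating
    (∀ x : V, α x x = 0) ∧
    -- α is J-invariant
    (∀ x y : V, α (J x) (J y) = α x y) ∧
    -- for every h ∈ Sym^{1,1}(V) and h₀ = ρ_g⁻¹(α):  -(1/2)⟨h, h₀⟩_g = ⟨h, S⟩_g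
    (∀ h h₀ : Module.End ℝ V,
      (∀ x y : V, ⟪h x, y⟫ = ⟪x, h y⟫) → h ∘ₗ J = J ∘ₗ h →
      (∀ x y : V, ⟪h₀ x, y⟫ = ⟪x, h₀ y⟫) → h₀ ∘ₗ J = J ∘ₗ h₀ →
      (∀ x y : V, ⟪J (h₀ x), y⟫ = α x y) →
      -(1/2 : ℝ) * LinearMap.trace ℝ V (h ∘ₗ LinearMap.adjoint h₀)
        = LinearMap.trace ℝ V (h ∘ₗ LinearMap.adjoint S)) := by
  have hJJ : ∀ x : V, J (J x) = -x := by
    intro x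
    have := congrArg (fun f => f x) hJ2
    simpa using this
  -- key: ⟪Sx, Jy⟫ = -⟪J(Sx), y⟫
  have key : ∀ x y : V, ⟪S x, J y⟫ = -⟪J (S x), y⟫ := by
    intro x y
    have := hJg (S x) (J y)
    rw [hJJ y] at this
    rw [← this]
    simp [inner_neg_right]
  refine ⟨?_, ?_, ?_⟩
  · intro x
    rw [hα, hSsym (J x) x, real_inner_comm (J x) (S x), sub_self]
  · intro x y
    rw [hα, hα, hJJ y, hJJ x]
    simp only [inner_neg_right, map_neg, inner_neg_left, neg_neg]
    ring
  · intro h h₀ hhsym hhJ hh₀sym hh₀J hρ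
    -- h₀ = -S + J ∘ S ∘ J
    have hform : h₀ = -S + J ∘ₗ S ∘ₗ J := by
      ext x
      have e3 : J (h₀ x) = (-(J ∘ₗ S) - S ∘ₗ J) x := by
        apply ext_inner_right ℝ
        intro y
        rw [hρ, hα, key x y]
        simp [inner_neg_left, sub_eq_add_neg, inner_add_left]
      have e4 := congrArg J e3
      rw [hJJ] at e4
      have e5 : h₀ x = - J ((-(J ∘ₗ S) - S ∘ₗ J) x) := by rw [← e4, neg_neg]
      rw [e5]
      simp only [LinearMap.sub_apply, LinearMap.neg_apply, LinearMap.comp_apply,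
        map_sub, map_neg, hJJ, LinearMap.add_apply, neg_neg, neg_sub]
      abel
    -- adjoints are themselves
    have hS : LinearMap.adjoint S = S :=
      (LinearMap.isSymmetric_iff_isSelfAdjoint S).mp (fun x y => hSsym x y)
    have hH0 : LinearMap.adjoint h₀ = h₀ :=
      (LinearMap.isSymmetric_iff_isSelfAdjoint h₀).mp (fun x y => hh₀sym x y)
    rw [hS, hH0, hform]
    have hcomp : h ∘ₗ (-S + J ∘ₗ S ∘ₗ J) = -(h ∘ₗ S) + h ∘ₗ (J ∘ₗ S ∘ₗ J) := by
      ext x; simp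
    rw [hcomp, map_add, map_neg]
    have hswap : h ∘ₗ (J ∘ₗ S ∘ₗ J) = J ∘ₗ ((h ∘ₗ S) ∘ₗ J) := by
      rw [← LinearMap.comp_assoc, hhJ]
      ext x; simp
    have htr : LinearMap.trace ℝ V (h ∘ₗ (J ∘ₗ S ∘ₗ J))
        = - LinearMap.trace ℝ V (h ∘ₗ S) := by
      rw [hswap]
      have := LinearMap.trace_mul_comm ℝ J ((h ∘ₗ S) ∘ₗ J)
      rw [show J * ((h ∘ₗ S) ∘ₗ J) = J ∘ₗ ((h ∘ₗ S) ∘ₗ J) from rfl] at this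
      rw [this]
      have hJJc : ((h ∘ₗ S) ∘ₗ J) * J = (h ∘ₗ S) ∘ₗ (J ∘ₗ J) := by
        ext x; simp [Module.End.mul_apply]
      rw [hJJc, hJ2]
      have : (h ∘ₗ S) ∘ₗ (-LinearMap.id) = -(h ∘ₗ S) := by ext x; simp
      rw [this, map_neg]
    rw [htr]
    ring
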